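/- Let F be a field with characteristic not dividing n, and let δ : F^{mn×mn} × F^{n×n} → F^{m×m} be a linear map with δ(A⊕B, B) = A for all A, B. Then there exists γ ∈ F^{m×m}⊗F^{n×n}⊗F^{m×m} with tr₂(γ) = 0 such that δ(A,B) = (1/n)(Ptr(A) − tr(B)·I_m) + tr₁₂(γᵀ(A⊗I_m − I_m⊗B⊗I_m)) for all A ∈ F^{mn×mn}, B ∈ F^{n×n}. -/

import Mathlib

open Matrix Kronecker

/-- The Kronecker sum `A ⊕ B = A ⊗ I + I ⊗ B`. -/
def ksum {F : Type*} [Semiring F] {α β : Type*} [Fintype α] [Fintype β]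
    [DecidableEq α] [DecidableEq β]
    (A : Matrix α α F) (B : Matrix β β F) : Matrix (α × β) (α × β) F :=
  A ⊗ₖ (1 : Matrix β β F) + (1 : Matrix α α F) ⊗ₖ B

/-- Partial trace over the first two tensor factors:
`tr12 (A ⊗ B ⊗ C) = tr A * tr B • C`. -/
def tr12 {F : Type*} [AddCommMonoid F] {α β γ : Type*} [Fintype α] [Fintype β]
    (M : Matrix ((α × β) × γ) ((α × β) × γ) F) : Matrix γ γ F :=
  Matrix.of fun c d => ∑ p : α × β, M (p, c) (p, d)

/-- Partial trace over the first tensor factor: `tr1 (A ⊗ B ⊗ C) = tr A • (B ⊗ C)`. -/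
def tr1 {F : Type*} [AddCommMonoid F] {α β γ : Type*} [Fintype α]
    (M : Matrix ((α × β) × γ) ((α × β) × γ) F) : Matrix (β × γ) (β × γ) F :=
  Matrix.of fun p q => ∑ i : α, M ((i, p.1), p.2) ((i, q.1), q.2)

/-- Partial trace over the middle tensor factor: `tr2 (A ⊗ B ⊗ C) = tr B • (A ⊗ C)`. -/
def tr2 {F : Type*} [AddCommMonoid F] {α β γ : Type*} [Fintype β]
    (M : Matrix ((α × β) × γ) ((α × β) × γ) F) : Matrix (α × γ) (α × γ) F :=
  Matrix.of fun p q => ∑ k : β, M ((p.1, k), p.2) ((q.1, k), q.2)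

/-- Partial trace over the third tensor factor: `tr3 (A ⊗ B ⊗ C) = tr C • (A ⊗ B)`. -/
def tr3 {F : Type*} [AddCommMonoid F] {α β γ : Type*} [Fintype γ]
    (M : Matrix ((α × β) × γ) ((α × β) × γ) F) : Matrix (α × β) (α × β) F :=
  Matrix.of fun p q => ∑ c : γ, M (p, c) (q, c)

/-- Partial trace over the second factor of a twofold Kronecker product:
`ptr (B ⊗ C) = tr C • B`. -/
def ptr {F : Type*} [AddCommMonoid F] {α β : Type*} [Fintype β]
    (M : Matrix (α × β) (α × β) F) : Matrix α α F :=
  Matrix.of fun i j => ∑ k : β, M (i, k) (j, k)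

/-- Partial transpose in the third tensor factor: `pT3 (A ⊗ B ⊗ C) = A ⊗ B ⊗ Cᵀ`. -/
def pT3 {F : Type*} {α β γ : Type*}
    (M : Matrix ((α × β) × γ) ((α × β) × γ) F) : Matrix ((α × β) × γ) ((α × β) × γ) F :=
  Matrix.of fun p q => M (p.1, q.2) (q.1, p.2)

/-- Partial transpose in the first two tensor factors:
`pT12 (A ⊗ B ⊗ C) = Aᵀ ⊗ Bᵀ ⊗ C`. -/
def pT12 {F : Type*} {α β γ : Type*}
    (M : Matrix ((α × β) × γ) ((α × β) × γ) F) : Matrix ((α × β) × γ) ((α × β) × γ) F :=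
  Matrix.of fun p q => M (q.1, p.2) (p.1, q.2)

theorem stmt7 {F : Type*} [Field F] {m n : ℕ} (hn : (n : F) ≠ 0)
    (δ : Matrix (Fin m × Fin n) (Fin m × Fin n) F → Matrix (Fin n) (Fin n) F →
      Matrix (Fin m) (Fin m) F)
    (hadd : ∀ A A' B B', δ (A + A') (B + B') = δ A B + δ A' B')
    (hsmul : ∀ (c : F) A B, δ (c • A) (c • B) = c • δ A B)
    (hdiff : ∀ (A : Matrix (Fin m) (Fin m) F) (B : Matrix (Fin n) (Fin n) F),
      δ (ksum A B) B = A) :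
    ∃ γ : Matrix ((Fin m × Fin n) × Fin m) ((Fin m × Fin n) × Fin m) F,
      tr2 γ = 0 ∧
      ∀ (A : Matrix (Fin m × Fin n) (Fin m × Fin n) F) (B : Matrix (Fin n) (Fin n) F),
        δ A B = (1 / (n : F)) • (ptr A - trace B • (1 : Matrix (Fin m) (Fin m) F)) +
          tr12 (γᵀ * (A ⊗ₖ (1 : Matrix (Fin m) (Fin m) F) -
            ((1 : Matrix (Fin m) (Fin m) F) ⊗ₖ B) ⊗ₖ (1 : Matrix (Fin m) (Fin m) F))) := by
  classical
  have hptr_add : ∀ A A' : Matrix (Fin m × Fin n) (Fin m × Fin n) F,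
      ptr (A + A') = ptr A + ptr A' := by
    intro A A'; ext i j; simp [ptr, Finset.sum_add_distrib]
  have hptr_smul : ∀ (c : F) (A : Matrix (Fin m × Fin n) (Fin m × Fin n) F),
      ptr (c • A) = c • ptr A := by
    intro c A; ext i j; simp [ptr, Finset.mul_sum]
  set φ : Matrix (Fin m × Fin n) (Fin m × Fin n) F →ₗ[F] Matrix (Fin m) (Fin m) F :=
    { toFun := fun A => δ A 0 - (n : F)⁻¹ • ptr A
      map_add' := fun A A' => by
        have h := hadd A A' 0 0
        rw [add_zero] at h
        simp only [h, hptr_add, smul_add]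
        abel
      map_smul' := fun c A => by
        have h := hsmul c A 0
        rw [smul_zero] at h
        simp only [h, hptr_smul, RingHom.id_apply, smul_sub]
        rw [smul_comm] } with hφ
  have hφdef : ∀ A, φ A = δ A 0 - (n : F)⁻¹ • ptr A := fun A => rfl
  have hφk : ∀ A : Matrix (Fin m) (Fin m) F,
      φ (A ⊗ₖ (1 : Matrix (Fin n) (Fin n) F)) = 0 := by
    intro A
    have h1 : δ (A ⊗ₖ (1 : Matrix (Fin n) (Fin n) F)) 0 = A := by
      have := hdiff A 0
      simpa [ksum] using this
    have h2 : ptr (A ⊗ₖ (1 : Matrix (Fin n) (Fin n) F)) = (n : F) • A := by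
      ext i j
      simp [ptr, kroneckerMap_apply, one_apply]
    rw [hφdef, h1, h2, smul_smul, inv_mul_cancel₀ hn, one_smul, sub_self]
  set γ : Matrix ((Fin m × Fin n) × Fin m) ((Fin m × Fin n) × Fin m) F :=
    Matrix.of (fun p q => φ (Matrix.single p.1 q.1 (1 : F)) q.2 p.2) with hγ
  have hkey : ∀ X : Matrix (Fin m × Fin n) (Fin m × Fin n) F,
      tr12 (γᵀ * (X ⊗ₖ (1 : Matrix (Fin m) (Fin m) F))) = φ X := by
    intro X
    ext c d
    have hX : φ X = ∑ i : Fin m × Fin n, ∑ j : Fin m × Fin n,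
        X i j • φ (Matrix.single i j (1 : F)) := by
      conv_lhs => rw [matrix_eq_sum_single X]
      rw [map_sum]
      refine Finset.sum_congr rfl fun i _ => ?_
      rw [map_sum]
      refine Finset.sum_congr rfl fun j _ => ?_
      rw [← _root_.map_smul]
      congr 1
      ext a b
      simp [Matrix.single]
    rw [hX]
    simp only [tr12, Matrix.of_apply, mul_apply, transpose_apply, Matrix.sum_apply,
      Matrix.smul_apply, smul_eq_mul, hγ, kroneckerMap_apply, one_apply, mul_ite, mul_one,
      mul_zero]
    have hcollapse : ∀ p : Fin m × Fin n,
        (∑ q : (Fin m × Fin n) × Fin m,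
          if q.2 = d then φ (Matrix.single q.1 p 1) c q.2 * X q.1 p else 0) =
        ∑ q1 : Fin m × Fin n, φ (Matrix.single q1 p 1) c d * X q1 p := by
      intro p
      rw [Fintype.sum_prod_type]
      refine Finset.sum_congr rfl fun q1 _ => ?_
      simp
    simp only [hcollapse]
    rw [Finset.sum_comm]
    refine Finset.sum_congr rfl fun i _ => Finset.sum_congr rfl fun j _ => mul_comm _ _
  refine ⟨γ, ?_, ?_⟩
  · ext ⟨a, dd⟩ ⟨u, cc⟩
    have hz : (∑ k : Fin n, φ (Matrix.single ((a,k) : Fin m × Fin n) (u,k) (1:F))) cc dd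
        = (0:F) := by
      rw [← map_sum]
      have hsum : (∑ k : Fin n, Matrix.single ((a,k) : Fin m × Fin n) (u,k) (1:F)) =
          (Matrix.single a u (1:F)) ⊗ₖ (1 : Matrix (Fin n) (Fin n) F) := by
        ext ⟨i, jj⟩ ⟨p, q⟩
        rw [Matrix.sum_apply]
        by_cases h3 : jj = q
        · subst h3
          simp only [Matrix.single, Matrix.of_apply, kroneckerMap_apply, one_apply,
            Prod.mk.injEq, if_true]
          rw [Finset.sum_eq_single jj (fun k _ hk => by simp [hk]) (by simp)]
          by_cases h1 : a = i <;> by_cases h2 : u = p <;> simp [h1, h2]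
        · simp only [Matrix.single, Matrix.of_apply, kroneckerMap_apply, one_apply,
            Prod.mk.injEq]
          rw [Finset.sum_eq_zero, if_neg h3, mul_zero]
          intro k _
          by_cases hk : k = jj
          · subst hk
            simp [h3]
          · simp [hk]
      rw [hsum, hφk]
      rfl
    simpa [tr2, hγ, Matrix.sum_apply] using hz
  · intro A B
    have hsub : A ⊗ₖ (1 : Matrix (Fin m) (Fin m) F) -
        ((1 : Matrix (Fin m) (Fin m) F) ⊗ₖ B) ⊗ₖ (1 : Matrix (Fin m) (Fin m) F) =
        (A - (1 : Matrix (Fin m) (Fin m) F) ⊗ₖ B) ⊗ₖ (1 : Matrix (Fin m) (Fin m) F) := by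
      ext p q
      simp [kroneckerMap_apply, Matrix.sub_apply, sub_mul]
    rw [hsub, hkey, map_sub, hφdef, hφdef]
    have hAB : δ A B = δ A 0 + δ 0 B := by
      have h := hadd A 0 0 B
      rw [add_zero, zero_add] at h
      exact h
    have hB : δ ((1 : Matrix (Fin m) (Fin m) F) ⊗ₖ B) 0 + δ 0 B = 0 := by
      have h0 := hdiff 0 B
      have hk0 : ksum (0 : Matrix (Fin m) (Fin m) F) B =
          (1 : Matrix (Fin m) (Fin m) F) ⊗ₖ B := by
        simp [ksum]
      rw [hk0] at h0
      have h2 := hadd ((1 : Matrix (Fin m) (Fin m) F) ⊗ₖ B) 0 0 B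
      rw [add_zero, zero_add] at h2
      rw [← h2, h0]
    have hptrB : ptr ((1 : Matrix (Fin m) (Fin m) F) ⊗ₖ B) =
        trace B • (1 : Matrix (Fin m) (Fin m) F) := by
      ext i j
      by_cases hij : i = j <;>
        simp [ptr, kroneckerMap_apply, one_apply, trace, Matrix.diag, hij]
    have hd0 : δ ((1 : Matrix (Fin m) (Fin m) F) ⊗ₖ B) 0 = - δ 0 B :=
      eq_neg_of_add_eq_zero_left hB
    rw [one_div, hptrB, hd0, hAB, smul_sub]
    abel
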